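/- Let (Ω, ℱ, ℙ) be a probability space, let c > 0 and ε > 0 be real numbers, and let X : Ω → ℝ be an integrable random variable such that X ≥ (1−ε)·c almost surely and E[X] ≤ (1+ε)·c. If ℙ[X ≤ c] ≤ 1/2, then ℙ[X > c] > 0 and the conditional expectation satisfies E[X | X > c] ≤ (1+4ε)·c. -/

import Mathlib

open MeasureTheory

/-- If `X ≥ (1−ε)c` almost surely, `E[X] ≤ (1+ε)c`, and `ℙ[X ≤ c] ≤ 1/2`, then the
event `{X > c}` has positive probability and `E[X | X > c] ≤ (1+4ε)c`, where
`E[X | A] = E[X·1_A]/ℙ[A]`. -/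
theorem conditional_expectation_bound {Ω : Type*} [MeasurableSpace Ω]
    (μ : Measure Ω) [IsProbabilityMeasure μ]
    (c ε : ℝ) (hc : 0 < c) (hε : 0 < ε)
    (X : Ω → ℝ) (hint : Integrable X μ)
    (hlb : ∀ᵐ ω ∂μ, (1 - ε) * c ≤ X ω)
    (hub : ∫ ω, X ω ∂μ ≤ (1 + ε) * c)
    (hhalf : μ {ω | X ω ≤ c} ≤ 1 / 2) :
    0 < μ {ω | c < X ω} ∧
      (∫ ω in {ω | c < X ω}, X ω ∂μ) / (μ {ω | c < X ω}).toReal ≤ (1 + 4 * ε) * c := by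
  have hX := hint.aestronglyMeasurable
  set Y := hX.mk X with hYdef
  have hXY : X =ᵐ[μ] Y := hX.ae_eq_mk
  have hYm : StronglyMeasurable Y := hX.stronglyMeasurable_mk
  have hYint : Integrable Y μ := hint.congr hXY
  set A := {ω | c < Y ω} with hAdef
  have hAm : MeasurableSet A := measurableSet_lt measurable_const hYm.measurable
  have hsets : {ω | c < X ω} =ᵐ[μ] A := by
    filter_upwards [hXY] with ω h
    show (c < X ω) = (c < Y ω)
    rw [h]
  have hmeas : μ {ω | c < X ω} = μ A := measure_congr hsets
  -- measure lower bound
  have hge : (1 : ENNReal) / 2 ≤ μ {ω | c < X ω} := by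
    have hcover : (Set.univ : Set Ω) ⊆ {ω | X ω ≤ c} ∪ {ω | c < X ω} := by
      intro ω _
      rcases le_or_gt (X ω) c with h | h
      · exact Or.inl h
      · exact Or.inr h
    have h1 : (1 : ENNReal) ≤ μ {ω | X ω ≤ c} + μ {ω | c < X ω} := by
      calc (1 : ENNReal) = μ Set.univ := (measure_univ).symm
        _ ≤ μ ({ω | X ω ≤ c} ∪ {ω | c < X ω}) := measure_mono hcover
        _ ≤ _ := measure_union_le _ _
    have h2 : (1 : ENNReal)/2 + 1/2 ≤ 1/2 + μ {ω | c < X ω} := by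
      calc (1 : ENNReal)/2 + 1/2 = 1 := ENNReal.add_halves 1
        _ ≤ μ {ω | X ω ≤ c} + μ {ω | c < X ω} := h1
        _ ≤ 1/2 + μ {ω | c < X ω} := add_le_add_left hhalf _
    exact (ENNReal.add_le_add_iff_left (by norm_num)).mp h2
  have hpos : 0 < μ {ω | c < X ω} := lt_of_lt_of_le (by norm_num) hge
  refine ⟨hpos, ?_⟩
  -- real-valued measures
  set p : ℝ := (μ A).toReal with hpdef
  have hAne : μ A ≠ ⊤ := measure_ne_top _ _
  have hAcne : μ Aᶜ ≠ ⊤ := measure_ne_top _ _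
  have hp_half : (1:ℝ)/2 ≤ p := by
    rw [hpdef]
    have := ENNReal.toReal_mono hAne (hmeas ▸ hge)
    simpa using this
  have hp_pos : 0 < p := lt_of_lt_of_le (by norm_num) hp_half
  have hsum : p + (μ Aᶜ).toReal = 1 := by
    have h := measure_add_measure_compl (μ := μ) hAm
    rw [measure_univ] at h
    have := congrArg ENNReal.toReal h
    rwa [ENNReal.toReal_add hAne hAcne, ENNReal.toReal_one] at this
  -- integrals
  have hIcongr : ∫ ω in {ω | c < X ω}, X ω ∂μ = ∫ ω in A, Y ω ∂μ := by
    rw [setIntegral_congr_set hsets]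
    exact integral_congr_ae (ae_restrict_of_ae hXY)
  have hlbY : ∀ᵐ ω ∂μ, (1 - ε) * c ≤ Y ω := by
    filter_upwards [hlb, hXY] with ω h1 h2
    rw [← h2]; exact h1
  have hcomp : (1 - ε) * c * (μ Aᶜ).toReal ≤ ∫ ω in Aᶜ, Y ω ∂μ := by
    have h := integral_mono_ae (μ := μ.restrict Aᶜ) (integrable_const ((1 - ε) * c))
      (hYint.integrableOn (s := Aᶜ)) (ae_restrict_of_ae (s := Aᶜ) hlbY)
    rw [integral_const] at h
    simpa [mul_comm, measureReal_def] using h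
  have hsplit : (∫ ω in A, Y ω ∂μ) + ∫ ω in Aᶜ, Y ω ∂μ = ∫ ω, Y ω ∂μ :=
    integral_add_compl hAm hYint
  have hubY : ∫ ω, Y ω ∂μ ≤ (1 + ε) * c := by
    rw [← integral_congr_ae hXY]; exact hub
  have hIA : (∫ ω in A, Y ω ∂μ) ≤ (1 + ε) * c - (1 - ε) * c * (μ Aᶜ).toReal := by
    have := hsplit
    nlinarith [hcomp, hubY]
  rw [hIcongr, hmeas, ← hpdef, div_le_iff₀ hp_pos]
  have hcompval : (μ Aᶜ).toReal = 1 - p := by linarith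
  rw [hcompval] at hIA
  nlinarith [hp_half, hε.le, hc.le, mul_pos hε hc]
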